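/- For every natural number k ≥ 6 divisible by 3, there exists an abelian subgroup H of G = Sym(k) with |H| = 3^(k/3) (for instance, the elementary abelian 3-group generated by k/3 disjoint 3-cycles), and every such subgroup satisfies log|H| ≥ (log 3 / 6) · log|G:H| / log log |G:H|. -/

import Mathlib

open Equiv Real Nat

namespace ElemAbSharp

/-- Cayley embedding of `ZMod 3` into `Perm (ZMod 3)`. -/
def cayley3 : Multiplicative (ZMod 3) →* Equiv.Perm (ZMod 3) where
  toFun x := Equiv.addLeft x.toAdd
  map_one' := by ext z; simp
  map_mul' x y := by ext z; simp [add_assoc]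

lemma cayley3_injective : Function.Injective cayley3 := by
  intro x y h
  have := congrArg (fun p : Equiv.Perm (ZMod 3) => p 0) h
  simpa [cayley3] using this

/-- Pi version. -/
def piCayley (m : ℕ) : (Fin m → Multiplicative (ZMod 3)) →* (Fin m → Equiv.Perm (ZMod 3)) :=
  Pi.monoidHom fun i => cayley3.comp (Pi.evalMonoidHom _ i)

lemma piCayley_injective (m : ℕ) : Function.Injective (piCayley m) := by
  intro f g h
  funext i
  exact cayley3_injective (congrFun h i)

/-- `permCongr` as a `MulEquiv`. -/
def permCongrMulEquiv {α β : Type*} (e : α ≃ β) : Equiv.Perm α ≃* Equiv.Perm β :=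
  { e.permCongr with
    map_mul' := fun p q => by
      ext x
      simp [Equiv.permCongr_def] }

lemma pow_succ_le (n : ℕ) : ((n : ℝ) + 1) ^ n ≤ Real.exp 1 * (n : ℝ) ^ n := by
  rcases Nat.eq_zero_or_pos n with h | h
  · subst h
    have h1 : (1 : ℝ) ≤ Real.exp 1 := by linarith [Real.add_one_le_exp (1 : ℝ)]
    simpa using h1
  · have hn : (0 : ℝ) < n := by exact_mod_cast h
    have h1 : (n : ℝ) + 1 = (n : ℝ) * (1 + 1 / n) := by field_simp
    have h2 : (1 : ℝ) + 1 / n ≤ Real.exp (1 / n) := by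
      linarith [Real.add_one_le_exp (1 / (n : ℝ))]
    have h3 : ((1 : ℝ) + 1 / n) ^ n ≤ (Real.exp (1 / n)) ^ n := by
      apply pow_le_pow_left₀ (by positivity) h2
    have h4 : (Real.exp (1 / n)) ^ n = Real.exp 1 := by
      rw [← Real.exp_nat_mul]
      congr 1
      field_simp
    calc ((n : ℝ) + 1) ^ n = (n : ℝ) ^ n * ((1 + 1 / n)) ^ n := by
          rw [h1, mul_pow]
      _ ≤ (n : ℝ) ^ n * Real.exp 1 := by
          apply mul_le_mul_of_nonneg_left _ (by positivity)
          rw [← h4]; exact h3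
      _ = Real.exp 1 * (n : ℝ) ^ n := by ring

lemma factorial_ge (n : ℕ) : ((n : ℝ) / 3) ^ n ≤ (n.factorial : ℝ) := by
  induction n with
  | zero => simp
  | succ n ih =>
    have hexp3 : Real.exp 1 ≤ 3 := by
      have := Real.exp_one_lt_d9
      linarith
    have hpow : (((n : ℝ) + 1) / 3) ^ n ≤ 3 * ((n : ℝ) / 3) ^ n := by
      rw [div_pow, div_pow]
      have h1 : ((n : ℝ) + 1) ^ n ≤ 3 * (n : ℝ) ^ n := by
        calc ((n : ℝ) + 1) ^ n ≤ Real.exp 1 * (n : ℝ) ^ n := pow_succ_le n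
          _ ≤ 3 * (n : ℝ) ^ n := by
              apply mul_le_mul_of_nonneg_right hexp3 (by positivity)
      calc ((n : ℝ) + 1) ^ n / 3 ^ n ≤ (3 * (n : ℝ) ^ n) / 3 ^ n :=
            (div_le_div_iff_of_pos_right (by positivity)).mpr h1
        _ = 3 * ((n : ℝ) ^ n / 3 ^ n) := by ring
    have hcast : ((n + 1 : ℕ) : ℝ) = (n : ℝ) + 1 := by push_cast; ring
    have key : (((n : ℝ) + 1) / 3) ^ (n + 1) ≤ ((n : ℝ) + 1) * ((n : ℝ) / 3) ^ n := by
      calc (((n : ℝ) + 1) / 3) ^ (n + 1)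
          = (((n : ℝ) + 1) / 3) * (((n : ℝ) + 1) / 3) ^ n := by ring
        _ ≤ (((n : ℝ) + 1) / 3) * (3 * ((n : ℝ) / 3) ^ n) := by
            apply mul_le_mul_of_nonneg_left hpow (by positivity)
        _ = ((n : ℝ) + 1) * ((n : ℝ) / 3) ^ n := by ring
    calc (((n + 1 : ℕ) : ℝ) / 3) ^ (n + 1) = (((n : ℝ) + 1) / 3) ^ (n + 1) := by rw [hcast]
      _ ≤ ((n : ℝ) + 1) * ((n : ℝ) / 3) ^ n := key
      _ ≤ ((n : ℝ) + 1) * (n.factorial : ℝ) := by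
          apply mul_le_mul_of_nonneg_left ih (by positivity)
      _ = ((n+1).factorial : ℝ) := by push_cast [Nat.factorial_succ]; ring

lemma logb_two_three_le : Real.logb 2 3 ≤ 7 / 4 := by
  rw [Real.logb, div_le_iff₀ (Real.log_pos one_lt_two)]
  have h81 : Real.log 81 ≤ Real.log 128 := Real.log_le_log (by norm_num) (by norm_num)
  have h1 : Real.log 81 = 4 * Real.log 3 := by
    rw [show (81 : ℝ) = 3 ^ (4 : ℕ) by norm_num, Real.log_pow]; push_cast; ring
  have h2 : Real.log 128 = 7 * Real.log 2 := by
    rw [show (128 : ℝ) = 2 ^ (7 : ℕ) by norm_num, Real.log_pow]; push_cast; ring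
  rw [h1, h2] at h81
  linarith

end ElemAbSharp

open ElemAbSharp in
/-- For every `k ≥ 6` divisible by `3`, the symmetric group `G = Sym(k)` has an
abelian subgroup `H` with `|H| = 3^(k/3)`, and every abelian subgroup of that
order satisfies `log₂ |H| ≥ (log₂ 3 / 6) · log₂ |G:H| / log₂ log₂ |G:H|`. -/
theorem elementary_abelian_subgroup_sharpness (k : ℕ) (hk : 6 ≤ k) (h3 : 3 ∣ k) :
    (∃ H : Subgroup (Equiv.Perm (Fin k)), IsMulCommutative H ∧
        Nat.card H = 3 ^ (k / 3)) ∧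
      ∀ H : Subgroup (Equiv.Perm (Fin k)), IsMulCommutative H →
        Nat.card H = 3 ^ (k / 3) →
        Real.logb 2 (Nat.card H) ≥
          (Real.logb 2 3 / 6) * Real.logb 2 (H.index) /
            Real.logb 2 (Real.logb 2 (H.index)) := by
  obtain ⟨m, hkm⟩ := h3
  have hm2 : 2 ≤ m := by omega
  have hdiv : k / 3 = m := by omega
  constructor
  · -- existence
    have hcard : Fintype.card (Σ _ : Fin m, ZMod 3) = Fintype.card (Fin k) := by
      simp [Fintype.card_sigma, hkm, Nat.mul_comm]
    let e : (Σ _ : Fin m, ZMod 3) ≃ Fin k := Fintype.equivOfCardEq hcard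
    let ψ : (Fin m → Multiplicative (ZMod 3)) →* Equiv.Perm (Fin k) :=
      ((permCongrMulEquiv e).toMonoidHom.comp
        (Equiv.Perm.sigmaCongrRightHom (fun _ : Fin m => ZMod 3))).comp (piCayley m)
    have hψ : Function.Injective ψ := by
      show Function.Injective
        (((permCongrMulEquiv e).toMonoidHom.comp
          (Equiv.Perm.sigmaCongrRightHom (fun _ : Fin m => ZMod 3))).comp (piCayley m))
      simp only [MonoidHom.coe_comp, MulEquiv.coe_toMonoidHom]
      exact ((permCongrMulEquiv e).injective.comp
        Equiv.Perm.sigmaCongrRightHom_injective).comp (piCayley_injective m)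
    refine ⟨ψ.range, ?_, ?_⟩
    · constructor
      constructor
      rintro ⟨a, x, rfl⟩ ⟨b, y, rfl⟩
      refine Subtype.ext ?_
      show ψ x * ψ y = ψ y * ψ x
      rw [← map_mul, ← map_mul, mul_comm]
    · have := Nat.card_congr (MonoidHom.ofInjective hψ).toEquiv
      rw [← this, hdiv]
      simp [Nat.card_eq_fintype_card]
  · -- the inequality
    intro H _ hH
    rw [hdiv] at hH
    have hlag : Nat.card H * H.index = Nat.card (Equiv.Perm (Fin k)) :=
      Subgroup.card_mul_index H
    have hcardG : Nat.card (Equiv.Perm (Fin k)) = k.factorial := by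
      simp [Nat.card_eq_fintype_card, Fintype.card_perm]
    rw [hH, hcardG] at hlag
    -- real versions
    have hmR : (2 : ℝ) ≤ (m : ℝ) := by exact_mod_cast hm2
    have hipos : 0 < H.index := by
      rcases Nat.eq_zero_or_pos H.index with h | h
      · exfalso; rw [h, mul_zero] at hlag; exact (Nat.factorial_pos k).ne' hlag.symm
      · exact h
    have hprodR : (3 : ℝ) ^ m * (H.index : ℝ) = (k.factorial : ℝ) := by
      exact_mod_cast congrArg (Nat.cast : ℕ → ℝ) hlag
    have hiR : (0 : ℝ) < (H.index : ℝ) := by exact_mod_cast hipos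
    set i : ℝ := (H.index : ℝ) with hi
    set L : ℝ := Real.logb 2 i with hL
    set c3 : ℝ := Real.logb 2 3 with hc3
    set lm : ℝ := Real.logb 2 m with hlm
    set lk : ℝ := Real.logb 2 k with hlk
    have hc3nn : 0 ≤ c3 := (Real.logb_pos one_lt_two (by norm_num)).le
    have hc3le : c3 ≤ 7 / 4 := logb_two_three_le
    have hlm1 : 1 ≤ lm := by
      rw [hlm, show (1 : ℝ) = Real.logb 2 2 by simp]
      exact Real.logb_le_logb_of_le one_lt_two (by norm_num) hmR
    have hkR : (k : ℝ) = 3 * m := by exact_mod_cast hkm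
    -- lower bound on i
    have hfact : ((k : ℝ) / 3) ^ k ≤ (k.factorial : ℝ) := factorial_ge k
    have hk3 : (k : ℝ) / 3 = (m : ℝ) := by rw [hkR]; ring
    have hilow : (m : ℝ) ^ k / 3 ^ m ≤ i := by
      rw [div_le_iff₀ (by positivity)]
      calc (m : ℝ) ^ k = ((k : ℝ) / 3) ^ k := by rw [hk3]
        _ ≤ (k.factorial : ℝ) := hfact
        _ = 3 ^ m * i := hprodR.symm
        _ = i * 3 ^ m := by ring
    set B : ℝ := 3 * m * lm - m * c3 with hB
    have hmpos : (0 : ℝ) < m := by linarith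
    have hBle : B ≤ L := by
      have h1 : Real.logb 2 ((m : ℝ) ^ k / 3 ^ m) ≤ L := by
        rw [hL]
        exact Real.logb_le_logb_of_le one_lt_two (by positivity) hilow
      have h2 : Real.logb 2 ((m : ℝ) ^ k / 3 ^ m) = B := by
        rw [Real.logb_div (by positivity) (by positivity), Real.logb_pow, Real.logb_pow,
          hB, hlm, hc3, hkm]
        push_cast
        ring
      linarith [h2 ▸ h1]
    have hBge : 5 / 4 * m ≤ B := by
      have : 5 / 4 ≤ 3 * lm - c3 := by linarith
      calc 5 / 4 * m ≤ (3 * lm - c3) * m := by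
            apply mul_le_mul_of_nonneg_right this (by positivity)
        _ = B := by rw [hB]; ring
    have hBpos : 0 < B := by linarith
    have hBsq : (k : ℝ) ≤ B ^ 2 := by
      rw [hkR]
      nlinarith [hBge, hmR]
    -- upper bound on L
    have hkpos : (0 : ℝ) < k := by linarith
    have hlkpos : 0 < lk := Real.logb_pos one_lt_two (by exact_mod_cast by omega : (1:ℝ) < k)
    have hLle : L ≤ (k : ℝ) * lk := by
      have h1 : i ≤ (k.factorial : ℝ) := by
        calc i = 1 * i := by ring
          _ ≤ 3 ^ m * i := by
              apply mul_le_mul_of_nonneg_right _ hiR.le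
              exact one_le_pow₀ (by norm_num)
          _ = (k.factorial : ℝ) := hprodR
      have h2 : (k.factorial : ℝ) ≤ (k : ℝ) ^ k := by exact_mod_cast Nat.factorial_le_pow k
      calc L ≤ Real.logb 2 ((k : ℝ) ^ k) := by
            rw [hL]
            exact Real.logb_le_logb_of_le one_lt_two hiR (h1.trans h2)
        _ = (k : ℝ) * lk := by rw [Real.logb_pow, hlk]
    -- lower bound on logb 2 L
    have hLLge : lk / 2 ≤ Real.logb 2 L := by
      have h1 : lk ≤ Real.logb 2 (B ^ 2) := by
        rw [hlk]
        exact Real.logb_le_logb_of_le one_lt_two hkpos hBsq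
      rw [Real.logb_pow] at h1
      have h2 : Real.logb 2 B ≤ Real.logb 2 L :=
        Real.logb_le_logb_of_le one_lt_two hBpos hBle
      push_cast at h1
      linarith
    have hLLpos : 0 < Real.logb 2 L := lt_of_lt_of_le (by linarith) hLLge
    -- conclude
    have hdivle : L / Real.logb 2 L ≤ ((k : ℝ) * lk) / (lk / 2) :=
      div_le_div₀ (by positivity) hLle (by linarith) hLLge
    have heq : ((k : ℝ) * lk) / (lk / 2) = 2 * k := by
      field_simp
    rw [heq] at hdivle
    have hLHS : Real.logb 2 (Nat.card H) = m * c3 := by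
      rw [hH]
      push_cast
      rw [Real.logb_pow, hc3]
    rw [ge_iff_le, hLHS, mul_div_assoc]
    calc c3 / 6 * (L / Real.logb 2 L) ≤ c3 / 6 * (2 * k) := by
          apply mul_le_mul_of_nonneg_left hdivle (by positivity)
      _ = m * c3 := by rw [hkR]; ring
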